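/- arXiv:1710.09609 — 5 statements merged into one kernel-verified Lean document; each statement's English description precedes it below -/
import Mathlib

section
/- Pointwise Rellich–Morawetz identity for the curl (equation (6.1) of the paper): Let A : ℝ³ → M₃(ℝ) be a continuously differentiable matrix-valued field such that A(y) is a symmetric matrix for every y ∈ ℝ³, and let ξ : ℝ³ → ℂ³ be continuously differentiable. Then for every y ∈ ℝ³, 2 Re( curl(Aξ)(y) · ( \overline{ξ(y)} × y ) ) = 2 Re( div( z ↦ (A(z)ξ(z)·z) \overline{ξ(z)} )(y) − (A(y)ξ(y)·y) (div \overline{ξ})(y) ) − div( z ↦ (A(z)ξ(z)·\overline{ξ(z)}) z )(y) + A(y)ξ(y)·\overline{ξ(y)} − ((y·∇)A)(y) ξ(y) · \overline{ξ(y)}, where Aξ denotes the vector field z ↦ A(z)ξ(z) (matrix–vector product with real entries of A viewed in ℂ), and ((y·∇)A)(y) is the real 3×3 matrix with entries Σₙ yₙ ∂ₙA_{jl}(y). -/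
noncomputable section

open Finset

/-- Partial derivative in the `i`-th coordinate direction of a function `(Fin 3 → ℝ) → ℂ`. -/
def pdC (i : Fin 3) (g : (Fin 3 → ℝ) → ℂ) (y : Fin 3 → ℝ) : ℂ :=
  fderiv ℝ g y (Pi.single i 1)

/-- Partial derivative in the `i`-th coordinate direction of a function `(Fin 3 → ℝ) → ℝ`. -/
def pdR (i : Fin 3) (g : (Fin 3 → ℝ) → ℝ) (y : Fin 3 → ℝ) : ℝ :=
  fderiv ℝ g y (Pi.single i 1)

/-- Unconjugated bilinear dot product on `ℂ³`. -/
def cdot (a b : Fin 3 → ℂ) : ℂ := ∑ i, a i * b i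

/-- Componentwise complex conjugation on `ℂ³`. -/
def cconj (a : Fin 3 → ℂ) : Fin 3 → ℂ := fun i => starRingEnd ℂ (a i)

/-- Cross product on `ℂ³`. -/
def ccross (a b : Fin 3 → ℂ) : Fin 3 → ℂ :=
  ![a 1 * b 2 - a 2 * b 1, a 2 * b 0 - a 0 * b 2, a 0 * b 1 - a 1 * b 0]

/-- A real vector regarded as an element of `ℂ³`. -/
def toC (x : Fin 3 → ℝ) : Fin 3 → ℂ := fun i => (x i : ℂ)

/-- Divergence of a vector field `(Fin 3 → ℝ) → ℂ³`. -/
def cdiv (v : (Fin 3 → ℝ) → (Fin 3 → ℂ)) (y : Fin 3 → ℝ) : ℂ :=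
  ∑ i, pdC i (fun z => v z i) y

/-- Curl of a vector field `(Fin 3 → ℝ) → ℂ³`. -/
def ccurl (v : (Fin 3 → ℝ) → (Fin 3 → ℂ)) (y : Fin 3 → ℝ) : Fin 3 → ℂ :=
  ![pdC 1 (fun z => v z 2) y - pdC 2 (fun z => v z 1) y,
    pdC 2 (fun z => v z 0) y - pdC 0 (fun z => v z 2) y,
    pdC 0 (fun z => v z 1) y - pdC 1 (fun z => v z 0) y]

/-- The vector field `z ↦ A(z) ξ(z)` (matrix–vector product, real entries of `A` viewed in `ℂ`). -/
def matVecField (A : (Fin 3 → ℝ) → Matrix (Fin 3) (Fin 3) ℝ)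
    (ξ : (Fin 3 → ℝ) → (Fin 3 → ℂ)) : (Fin 3 → ℝ) → (Fin 3 → ℂ) :=
  fun z j => ∑ l, (A z j l : ℂ) * ξ z l

/-- A real `3×3` matrix applied to a complex vector. -/
def mvC (M : Matrix (Fin 3) (Fin 3) ℝ) (v : Fin 3 → ℂ) : Fin 3 → ℂ :=
  fun j => ∑ l, (M j l : ℂ) * v l

/-- The radial derivative matrix `((y·∇)A)(y)` with entries `Σₙ yₙ ∂ₙA_{jl}(y)`. -/
def radDerivMat (A : (Fin 3 → ℝ) → Matrix (Fin 3) (Fin 3) ℝ) (y : Fin 3 → ℝ) :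
    Matrix (Fin 3) (Fin 3) ℝ :=
  Matrix.of fun j l => ∑ n, y n * pdR n (fun z => A z j l) y

set_option maxHeartbeats 2000000 in
lemma pdC_mul {f g : (Fin 3 → ℝ) → ℂ} {y : Fin 3 → ℝ} (i : Fin 3)
    (hf : DifferentiableAt ℝ f y) (hg : DifferentiableAt ℝ g y) :
    pdC i (fun z => f z * g z) y = pdC i f y * g y + f y * pdC i g y := by
  unfold pdC
  rw [fderiv_fun_mul hf hg]
  simp [mul_comm]
  try ring

lemma pdC_sum {f : Fin 3 → (Fin 3 → ℝ) → ℂ} {y : Fin 3 → ℝ} (i : Fin 3)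
    (hf : ∀ j, DifferentiableAt ℝ (f j) y) :
    pdC i (fun z => ∑ j, f j z) y = ∑ j, pdC i (f j) y := by
  unfold pdC
  rw [fderiv_fun_sum (fun j _ => hf j)]
  simp

lemma pdC_conj {f : (Fin 3 → ℝ) → ℂ} {y : Fin 3 → ℝ} (i : Fin 3) :
    pdC i (fun z => starRingEnd ℂ (f z)) y = starRingEnd ℂ (pdC i f y) := by
  unfold pdC
  rw [show (fun z => starRingEnd ℂ (f z)) = fun z => star (f z) from rfl, fderiv_star]
  simp

lemma pdC_ofReal {f : (Fin 3 → ℝ) → ℝ} {y : Fin 3 → ℝ} (i : Fin 3) :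
    pdC i (fun z => (f z : ℂ)) y = (pdR i f y : ℂ) := by
  unfold pdC pdR
  by_cases hf : DifferentiableAt ℝ f y
  · have := (Complex.ofRealCLM.hasFDerivAt.comp y hf.hasFDerivAt).fderiv
    rw [show (fun z => ((f z : ℂ))) = ⇑Complex.ofRealCLM ∘ f from rfl, this]
    simp
  · have h2 : ¬ DifferentiableAt ℝ (fun z => (f z : ℂ)) y := by
      intro h
      exact hf (by simpa [Function.comp_def] using (Complex.reCLM.hasFDerivAt.comp y h.hasFDerivAt).differentiableAt)
    rw [fderiv_zero_of_not_differentiableAt hf, fderiv_zero_of_not_differentiableAt h2]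
    simp

lemma pdC_coord {y : Fin 3 → ℝ} (i j : Fin 3) :
    pdC i (fun z => (z j : ℂ)) y = if i = j then 1 else 0 := by
  unfold pdC
  have : (fun z : Fin 3 → ℝ => (z j : ℂ))
      = (Complex.ofRealCLM.comp (ContinuousLinearMap.proj j : (Fin 3 → ℝ) →L[ℝ] ℝ)) := rfl
  rw [this, ContinuousLinearMap.fderiv]
  simp [Pi.single_apply, eq_comm]
  split <;> simp

set_option maxHeartbeats 1000000 in
/-- **Pointwise Rellich–Morawetz identity for the curl** (equation (6.1)).
For a `C¹` symmetric real-matrix-valued field `A` and a `C¹` field `ξ : ℝ³ → ℂ³`, at every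
`y ∈ ℝ³`:
`2 Re( curl(Aξ)(y) · ( conj ξ(y) × y ) )
  = 2 Re( div( z ↦ (A(z)ξ(z)·z) conj ξ(z) )(y) − (A(y)ξ(y)·y) (div conj ξ)(y) )
    − div( z ↦ (A(z)ξ(z)·conj ξ(z)) z )(y) + A(y)ξ(y)·conj ξ(y)
    − ((y·∇)A)(y) ξ(y) · conj ξ(y)`. -/
theorem rellich_morawetz_curl_identity
    (A : (Fin 3 → ℝ) → Matrix (Fin 3) (Fin 3) ℝ)
    (hA : ∀ j l, ContDiff ℝ 1 (fun y => A y j l))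
    (hAsymm : ∀ y, (A y).IsSymm)
    (ξ : (Fin 3 → ℝ) → (Fin 3 → ℂ))
    (hξ : ∀ i, ContDiff ℝ 1 (fun y => ξ y i))
    (y : Fin 3 → ℝ) :
    ((2 * (cdot (ccurl (matVecField A ξ) y) (ccross (cconj (ξ y)) (toC y))).re : ℝ) : ℂ)
      = ((2 * ((cdiv (fun z i => cdot (matVecField A ξ z) (toC z) * starRingEnd ℂ (ξ z i)) y
              - cdot (matVecField A ξ y) (toC y) * cdiv (fun z => cconj (ξ z)) y).re) : ℝ) : ℂ)
        - cdiv (fun z i => cdot (matVecField A ξ z) (cconj (ξ z)) * (z i : ℂ)) y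
        + cdot (matVecField A ξ y) (cconj (ξ y))
        - cdot (mvC (radDerivMat A y) (ξ y)) (cconj (ξ y)) := by
  -- differentiability facts
  have dA : ∀ j l, DifferentiableAt ℝ (fun z => ((A z j l : ℝ) : ℂ)) y :=
    fun j l => Complex.ofRealCLM.differentiable.comp ((hA j l).differentiable one_ne_zero) y
  have dξ : ∀ l, DifferentiableAt ℝ (fun z => ξ z l) y :=
    fun l => (hξ l).differentiable one_ne_zero y
  have dξc : ∀ l, DifferentiableAt ℝ (fun z => starRingEnd ℂ (ξ z l)) y :=
    fun l => (dξ l).star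
  have dco : ∀ j, DifferentiableAt ℝ (fun z : Fin 3 → ℝ => ((z j : ℝ) : ℂ)) y :=
    fun j => (Complex.ofRealCLM.comp
      (ContinuousLinearMap.proj j : (Fin 3 → ℝ) →L[ℝ] ℝ)).differentiable y
  have dmv : ∀ j, DifferentiableAt ℝ (fun z => matVecField A ξ z j) y := by
    intro j
    simp only [matVecField]
    exact DifferentiableAt.fun_sum (fun l _ => (dA j l).mul (dξ l))
  have dS : DifferentiableAt ℝ (fun z => cdot (matVecField A ξ z) (toC z)) y := by
    simp only [cdot, toC]
    exact DifferentiableAt.fun_sum (fun j _ => (dmv j).mul (dco j))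
  have dT : DifferentiableAt ℝ (fun z => cdot (matVecField A ξ z) (cconj (ξ z))) y := by
    simp only [cdot, cconj]
    exact DifferentiableAt.fun_sum (fun j _ => (dmv j).mul (dξc j))
  -- pdC of the matrix-vector field
  have pmv : ∀ i j, pdC i (fun z => matVecField A ξ z j) y
      = ∑ l, ((pdR i (fun z => A z j l) y : ℂ) * ξ y l
            + (A y j l : ℂ) * pdC i (fun z => ξ z l) y) := by
    intro i j
    simp only [matVecField]
    rw [pdC_sum i (fun l => (dA j l).fun_mul (dξ l))]
    refine Finset.sum_congr rfl fun l _ => ?_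
    rw [pdC_mul i (dA j l) (dξ l), pdC_ofReal]
  have pS : ∀ i, pdC i (fun z => cdot (matVecField A ξ z) (toC z)) y
      = (∑ j, pdC i (fun z => matVecField A ξ z j) y * (y j : ℂ)) + matVecField A ξ y i := by
    intro i
    simp only [cdot, toC]
    rw [pdC_sum i (fun j => (dmv j).fun_mul (dco j))]
    have h1 : ∀ j ∈ (univ : Finset (Fin 3)),
        pdC i (fun z => matVecField A ξ z j * ((z j : ℝ) : ℂ)) y
        = pdC i (fun z => matVecField A ξ z j) y * (y j : ℂ)
          + matVecField A ξ y j * (if i = j then 1 else 0) := by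
      intro j _
      rw [pdC_mul i (dmv j) (dco j), pdC_coord]
    rw [Finset.sum_congr rfl h1, Finset.sum_add_distrib]
    simp [mul_ite]
  have pT : ∀ i, pdC i (fun z => cdot (matVecField A ξ z) (cconj (ξ z))) y
      = ∑ j, (pdC i (fun z => matVecField A ξ z j) y * starRingEnd ℂ (ξ y j)
            + matVecField A ξ y j * starRingEnd ℂ (pdC i (fun z => ξ z j) y)) := by
    intro i
    simp only [cdot, cconj]
    rw [pdC_sum i (fun j => (dmv j).fun_mul (dξc j))]
    refine Finset.sum_congr rfl fun j _ => ?_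
    rw [pdC_mul i (dmv j) (dξc j), pdC_conj]
  -- divergence computations
  have div1 : cdiv (fun z i => cdot (matVecField A ξ z) (toC z) * starRingEnd ℂ (ξ z i)) y
      = ∑ i, (pdC i (fun z => cdot (matVecField A ξ z) (toC z)) y * starRingEnd ℂ (ξ y i)
            + cdot (matVecField A ξ y) (toC y) * starRingEnd ℂ (pdC i (fun z => ξ z i) y)) := by
    unfold cdiv
    refine Finset.sum_congr rfl fun i _ => ?_
    rw [pdC_mul i dS (dξc i), pdC_conj]
  have div2 : cdiv (fun z => cconj (ξ z)) y = ∑ i, starRingEnd ℂ (pdC i (fun z => ξ z i) y) := by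
    unfold cdiv cconj
    exact Finset.sum_congr rfl fun i _ => pdC_conj i
  have div3 : cdiv (fun z i => cdot (matVecField A ξ z) (cconj (ξ z)) * (z i : ℂ)) y
      = ∑ i, (pdC i (fun z => cdot (matVecField A ξ z) (cconj (ξ z))) y * (y i : ℂ)
            + cdot (matVecField A ξ y) (cconj (ξ y))) := by
    unfold cdiv
    refine Finset.sum_congr rfl fun i _ => ?_
    rw [pdC_mul i dT (dco i), pdC_coord]
    simp
  -- symmetry
  have hs : ∀ z j l, A z l j = A z j l := fun z j l => congrFun (congrFun (hAsymm z) j) l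
  have hbs : ∀ n j l, pdR n (fun z => A z l j) y = pdR n (fun z => A z j l) y := by
    intro n j l
    congr 1
    funext z
    exact hs z j l
  -- real-part rewriting
  have tworeC : ∀ w : ℂ, ((2 * w.re : ℝ) : ℂ) = w + starRingEnd ℂ w := by
    intro w
    rw [Complex.add_conj]
  rw [tworeC, tworeC, div1, div2, div3]
  simp only [pS, pT]
  simp only [cdot, ccurl, ccross, cconj, toC, mvC, radDerivMat, Matrix.of_apply,
    Fin.sum_univ_three, Matrix.cons_val_zero, Matrix.cons_val_one, Matrix.head_cons,
    Matrix.cons_val_two, Matrix.tail_cons]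
  simp only [pmv, Fin.sum_univ_three]
  simp only [matVecField, Fin.sum_univ_three]
  simp only [map_add, map_sub, map_mul, map_sum, Complex.conj_ofReal, Complex.conj_conj,
    Fin.sum_univ_three]
  simp only [hs y 0 1, hs y 0 2, hs y 1 2,
      hbs 0 0 1, hbs 0 0 2, hbs 0 1 2,
      hbs 1 0 1, hbs 1 0 2, hbs 1 1 2,
      hbs 2 0 1, hbs 2 0 2, hbs 2 1 2]
  push_cast
  ring
end
end

section
/- Abstract inf-sup lemma behind Lemma 4.9 (inf-sup stability from a Gårding-type inequality, a sign-flip map, and adjoint solvability): Let H be a complex Hilbert space and B : H × H → ℂ a sesquilinear form (linear in the first argument, additive and conjugate-homogeneous in the second). Let γ > 0, c ≥ 0, S ≥ 0, M ≥ 0, let F : H → H satisfy ‖F(v)‖ ≤ ‖v‖ for all v ∈ H, and let P : H → H be a linear map with ‖P(v)‖ ≤ M‖v‖ for all v ∈ H. Assume: (i) (Gårding-type inequality) |B(v, F(v)) + c‖P(v)‖²| ≥ γ‖v‖² for all v ∈ H; (ii) (adjoint solvability) for every v ∈ H there exists w ∈ H with B(v, w) = c‖P(v)‖² and ‖w‖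 ≤ S‖P(v)‖. Then for every v ∈ H there exists w' ∈ H with ‖w'‖ ≤ (1 + S·M)‖v‖ and |B(v, w')| ≥ γ‖v‖². In particular, for every v ≠ 0 there exists w' ≠ 0 with |B(v, w')| ≥ (γ/(1 + S·M)) ‖v‖ ‖w'‖. -/
/-- **Abstract inf-sup lemma** behind Lemma 4.9: inf-sup stability from a Gårding-type
inequality, a sign-flip map `F`, and solvability of an adjoint problem. -/
theorem abstract_inf_sup_from_garding
    {H : Type*} [NormedAddCommGroup H] [InnerProductSpace ℂ H] [CompleteSpace H]
    (B : H → H → ℂ)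
    (hB_add₁ : ∀ u v w : H, B (u + v) w = B u w + B v w)
    (hB_smul₁ : ∀ (c : ℂ) (u w : H), B (c • u) w = c * B u w)
    (hB_add₂ : ∀ u v w : H, B u (v + w) = B u v + B u w)
    (hB_smul₂ : ∀ (c : ℂ) (u w : H), B u (c • w) = (starRingEnd ℂ c) * B u w)
    (γ c S M : ℝ) (hγ : 0 < γ) (hc : 0 ≤ c) (hS : 0 ≤ S) (hM : 0 ≤ M)
    (F : H → H) (hF : ∀ v : H, ‖F v‖ ≤ ‖v‖)
    (P : H →ₗ[ℂ] H) (hP : ∀ v : H, ‖P v‖ ≤ M * ‖v‖)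
    (hGarding : ∀ v : H, γ * ‖v‖ ^ 2 ≤ ‖B v (F v) + ((c * ‖P v‖ ^ 2 : ℝ) : ℂ)‖)
    (hAdjoint : ∀ v : H, ∃ w : H,
      B v w = ((c * ‖P v‖ ^ 2 : ℝ) : ℂ) ∧ ‖w‖ ≤ S * ‖P v‖) :
    (∀ v : H, ∃ w' : H, ‖w'‖ ≤ (1 + S * M) * ‖v‖ ∧ γ * ‖v‖ ^ 2 ≤ ‖B v w'‖) ∧
      (∀ v : H, v ≠ 0 → ∃ w' : H, w' ≠ 0 ∧
        γ / (1 + S * M) * (‖v‖ * ‖w'‖) ≤ ‖B v w'‖) := by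
  have hmain : ∀ v : H, ∃ w' : H, ‖w'‖ ≤ (1 + S * M) * ‖v‖ ∧
      γ * ‖v‖ ^ 2 ≤ ‖B v w'‖ := by
    intro v
    obtain ⟨w, hw1, hw2⟩ := hAdjoint v
    refine ⟨F v + w, ?_, ?_⟩
    · calc ‖F v + w‖ ≤ ‖F v‖ + ‖w‖ := norm_add_le _ _
        _ ≤ ‖v‖ + S * (M * ‖v‖) := by
            nlinarith [hP v, hF v, hw2, norm_nonneg (P v)]
        _ = (1 + S * M) * ‖v‖ := by ring
    · rw [hB_add₂, hw1]
      exact hGarding v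
  refine ⟨hmain, fun v hv => ?_⟩
  obtain ⟨w', hw1, hw2⟩ := hmain v
  have hvpos : 0 < ‖v‖ := norm_pos_iff.mpr hv
  have hpos : 0 < γ * ‖v‖ ^ 2 := by positivity
  have hw'ne : w' ≠ 0 := by
    intro h
    have hz : B v (0 : H) = 0 := by
      have := hB_add₂ v 0 0
      simpa using this.symm
    rw [h, hz] at hw2
    simp at hw2
    nlinarith
  have h1SM : 0 < 1 + S * M := by nlinarith
  refine ⟨w', hw'ne, ?_⟩
  calc γ / (1 + S * M) * (‖v‖ * ‖w'‖)
      ≤ γ / (1 + S * M) * (‖v‖ * ((1 + S * M) * ‖v‖)) := by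
        apply mul_le_mul_of_nonneg_left _ (by positivity)
        exact mul_le_mul_of_nonneg_left hw1 (norm_nonneg v)
    _ = γ * ‖v‖ ^ 2 := by field_simp
    _ ≤ ‖B v w'‖ := hw2
end

section
/- Abstract quasi-optimality of Galerkin approximations under a Gårding-type inequality and a duality (Aubin–Nitsche) hypothesis, the skeleton of the quasi-optimality estimate (5.3) in Theorem 5.2: Let H be a complex Hilbert space, B : H × H → ℂ a sesquilinear form with |B(u,v)| ≤ C_c‖u‖‖v‖ for all u, v ∈ H, and V ⊆ H a subspace. Let γ > 0, κ ≥ 0, τ ≥ 0 satisfy κ·C_c²·τ² ≤ γ/2, and let P : H → H be a linear map. Let u ∈ H and u_h ∈ V satisfy the Galerkin orthogonality B(u − u_h, v) = 0 for all v ∈ V, and set e := u − u_h. Assume: (i) γ‖e‖² ≤ |B(e,e)| + κ‖P(e)‖²; (ii) there exist w ∈ H and w_h ∈ V with B(e, w) = ‖P(e)‖² and ‖w − w_h‖ ≤ τ‖P(e)‖. Then ‖e‖ ≤ (2 C_c/γ) ‖u − v‖ for every v ∈ V. -/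
/-- **Abstract quasi-optimality of Galerkin approximations** under a Gårding-type inequality
and a duality (Aubin–Nitsche) hypothesis: the skeleton of the quasi-optimality estimate (5.3)
of Theorem 5.2. -/
theorem abstract_galerkin_quasi_optimality
    {H : Type*} [NormedAddCommGroup H] [InnerProductSpace ℂ H] [CompleteSpace H]
    (B : H → H → ℂ) (C_c : ℝ) (hC_c : 0 < C_c)
    (hB_add₁ : ∀ u v w : H, B (u + v) w = B u w + B v w)
    (hB_smul₁ : ∀ (c : ℂ) (u w : H), B (c • u) w = c * B u w)
    (hB_add₂ : ∀ u v w : H, B u (v + w) = B u v + B u w)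
    (hB_smul₂ : ∀ (c : ℂ) (u w : H), B u (c • w) = (starRingEnd ℂ c) * B u w)
    (hB_bound : ∀ u v : H, ‖B u v‖ ≤ C_c * ‖u‖ * ‖v‖)
    (V : Submodule ℂ H)
    (γ κ τ : ℝ) (hγ : 0 < γ) (hκ : 0 ≤ κ) (hτ : 0 ≤ τ)
    (hres : κ * C_c ^ 2 * τ ^ 2 ≤ γ / 2)
    (P : H →ₗ[ℂ] H)
    (u u_h : H) (hu_h : u_h ∈ V)
    (hGalerkin : ∀ v ∈ V, B (u - u_h) v = 0)
    (hGarding : γ * ‖u - u_h‖ ^ 2 ≤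
      ‖B (u - u_h) (u - u_h)‖ + κ * ‖P (u - u_h)‖ ^ 2)
    (hdual : ∃ w : H, ∃ w_h ∈ V,
      B (u - u_h) w = ((‖P (u - u_h)‖ ^ 2 : ℝ) : ℂ) ∧ ‖w - w_h‖ ≤ τ * ‖P (u - u_h)‖) :
    ∀ v ∈ V, ‖u - u_h‖ ≤ (2 * C_c / γ) * ‖u - v‖ := by
  intro v hv
  set e := u - u_h with he
  obtain ⟨w, w_h, hwh, hBw, hw⟩ := hdual
  -- B e w = B e (w - w_h)
  have hsplit : B e w = B e (w - w_h) + B e w_h := by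
    have := hB_add₂ e (w - w_h) w_h
    rwa [sub_add_cancel] at this
  have hBw' : B e (w - w_h) = ((‖P e‖ ^ 2 : ℝ) : ℂ) := by
    rw [hsplit, hGalerkin w_h hwh, add_zero] at hBw
    exact hBw
  -- ‖P e‖ ≤ C_c * τ * ‖e‖
  have hPe2 : ‖P e‖ ^ 2 ≤ C_c * ‖e‖ * (τ * ‖P e‖) := by
    have h1 := hB_bound e (w - w_h)
    rw [hBw'] at h1
    rw [Complex.norm_real, Real.norm_eq_abs, abs_of_nonneg (sq_nonneg ‖P e‖)] at h1
    calc ‖P e‖ ^ 2 ≤ C_c * ‖e‖ * ‖w - w_h‖ := h1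
      _ ≤ C_c * ‖e‖ * (τ * ‖P e‖) := by
          apply mul_le_mul_of_nonneg_left hw
          positivity
  have hPe : ‖P e‖ ≤ C_c * τ * ‖e‖ := by
    rcases eq_or_lt_of_le (norm_nonneg (P e)) with h0 | h0
    · rw [← h0]; positivity
    · nlinarith [norm_nonneg (P e)]
  -- B e e = B e (u - v)
  have hBe : B e e = B e (u - v) := by
    have hmem : v - u_h ∈ V := V.sub_mem hv hu_h
    have := hB_add₂ e (u - v) (v - u_h)
    rw [hGalerkin _ hmem, add_zero] at this
    rw [← this]
    congr 1
    rw [he]; abel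
  have hb : ‖B e e‖ ≤ C_c * ‖e‖ * ‖u - v‖ := by
    rw [hBe]; exact hB_bound e (u - v)
  have hkey : γ / 2 * ‖e‖ ^ 2 ≤ C_c * ‖e‖ * ‖u - v‖ := by
    have hκP : κ * ‖P e‖ ^ 2 ≤ γ / 2 * ‖e‖ ^ 2 := by
      have : κ * ‖P e‖ ^ 2 ≤ κ * (C_c * τ * ‖e‖) ^ 2 := by
        apply mul_le_mul_of_nonneg_left _ hκ
        exact pow_le_pow_left₀ (norm_nonneg _) hPe 2
      nlinarith [sq_nonneg ‖e‖]
    nlinarith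
  rcases eq_or_lt_of_le (norm_nonneg e) with h0 | h0
  · rw [← h0]; positivity
  · rw [div_mul_eq_mul_div, le_div_iff₀ hγ]
    nlinarith
end

section
/- Pointwise boundary estimate via a weighted Young inequality, used in the third step of the proof of the Rellich–Morawetz lemma (estimate (6.2)): Let n ∈ ℝ³ with |n| = 1, let x ∈ ℝ³ with x·n > 0, and let ξ ∈ ℂ³. Define ξ_N := (ξ·n)·n, ξ_T := ξ − ξ_N, and x_T := x − (x·n)·n. Then (|ξ_T|² − |ξ_N|²)(x·n) − 2 Re( (ξ_T·x_T)·conj(ξ·n) ) ≤ |ξ_T|² |x|² / (x·n). -/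
noncomputable section

open Finset

/-- The pairing `a·v := Σᵢ aᵢvᵢ ∈ ℂ` of a complex vector `a ∈ ℂ³` with a real vector
`v ∈ ℝ³` (regarded as an element of `ℂ³`). -/
def cdotR (a : Fin 3 → ℂ) (v : Fin 3 → ℝ) : ℂ := ∑ i, a i * (v i : ℂ)

/-- Squared Hermitian norm `|a|² := Σᵢ |aᵢ|²` on `ℂ³`. -/
def hnormSq (a : Fin 3 → ℂ) : ℝ := ∑ i, ‖a i‖ ^ 2

/-- **Pointwise boundary estimate via a weighted Young inequality**, used in the third step of
the proof of the Rellich–Morawetz lemma (estimate (6.2)): for a unit vector `n ∈ ℝ³`, a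
vector `x ∈ ℝ³` with `x·n > 0`, and `ξ ∈ ℂ³`, with `ξ_N := (ξ·n)n`, `ξ_T := ξ − ξ_N`,
`x_T := x − (x·n)n`, one has
`(|ξ_T|² − |ξ_N|²)(x·n) − 2 Re( (ξ_T·x_T) conj(ξ·n) ) ≤ |ξ_T|² |x|² / (x·n)`. -/
theorem boundary_estimate_weighted_young
    (n x : Fin 3 → ℝ) (hn : ∑ i, n i ^ 2 = 1) (hx : 0 < ∑ i, x i * n i)
    (ξ : Fin 3 → ℂ)
    (ξN : Fin 3 → ℂ) (hξN : ξN = fun i => cdotR ξ n * (n i : ℂ))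
    (ξT : Fin 3 → ℂ) (hξT : ξT = fun i => ξ i - ξN i)
    (xT : Fin 3 → ℝ) (hxT : xT = fun i => x i - (∑ j, x j * n j) * n i) :
    (hnormSq ξT - hnormSq ξN) * (∑ i, x i * n i)
        - 2 * (cdotR ξT xT * starRingEnd ℂ (cdotR ξ n)).re
      ≤ hnormSq ξT * (∑ i, x i ^ 2) / (∑ i, x i * n i) := by
  set d : ℝ := ∑ i, x i * n i with hd
  set c : ℂ := cdotR ξ n with hc
  set z : ℂ := cdotR ξT xT with hz
  set A : ℝ := hnormSq ξT with hA
  -- |ξN|² = |c|²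
  have hBN : hnormSq ξN = ‖c‖ ^ 2 := by
    rw [hξN]
    simp only [hnormSq, norm_mul, Complex.norm_real, Real.norm_eq_abs, mul_pow, sq_abs]
    rw [← Finset.mul_sum, hn, mul_one]
  -- |x|² = |xT|² + d²
  have hsum : (∑ i, x i ^ 2) = (∑ i, xT i ^ 2) + d ^ 2 := by
    have : ∀ i, xT i ^ 2 = x i ^ 2 - 2 * d * (x i * n i) + d ^ 2 * n i ^ 2 := by
      intro i; rw [hxT]; ring
    rw [Finset.sum_congr rfl fun i _ => this i]
    rw [Finset.sum_add_distrib, Finset.sum_sub_distrib, ← Finset.mul_sum, ← Finset.mul_sum,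
      hn, ← hd]
    ring
  -- nonnegativity
  have hA0 : 0 ≤ A := Finset.sum_nonneg fun i _ => sq_nonneg _
  have hs0 : 0 ≤ ∑ i, xT i ^ 2 := Finset.sum_nonneg fun i _ => sq_nonneg _
  -- Cauchy–Schwarz : |z|² ≤ A * ∑ xT²
  have hCS : ‖z‖ ^ 2 ≤ A * ∑ i, xT i ^ 2 := by
    have hzre : z.re = ∑ i, (ξT i).re * xT i := by
      rw [hz, cdotR, Complex.re_sum]
      exact Finset.sum_congr rfl fun i _ => by simp
    have hzim : z.im = ∑ i, (ξT i).im * xT i := by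
      rw [hz, cdotR, Complex.im_sum]
      exact Finset.sum_congr rfl fun i _ => by simp
    have h1 := Finset.sum_mul_sq_le_sq_mul_sq Finset.univ (fun i => (ξT i).re) xT
    have h2 := Finset.sum_mul_sq_le_sq_mul_sq Finset.univ (fun i => (ξT i).im) xT
    have hAeq : A = (∑ i, (ξT i).re ^ 2) + ∑ i, (ξT i).im ^ 2 := by
      rw [hA, hnormSq, ← Finset.sum_add_distrib]
      refine Finset.sum_congr rfl fun i _ => ?_
      rw [Complex.sq_norm, Complex.normSq_apply]; ring
    rw [Complex.sq_norm, Complex.normSq_apply, hzre, hzim, hAeq]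
    calc (∑ i, (ξT i).re * xT i) * (∑ i, (ξT i).re * xT i)
          + (∑ i, (ξT i).im * xT i) * (∑ i, (ξT i).im * xT i)
        = (∑ i, (ξT i).re * xT i) ^ 2 + (∑ i, (ξT i).im * xT i) ^ 2 := by ring
      _ ≤ (∑ i, (ξT i).re ^ 2) * (∑ i, xT i ^ 2) + (∑ i, (ξT i).im ^ 2) * (∑ i, xT i ^ 2) :=
          add_le_add h1 h2
      _ = ((∑ i, (ξT i).re ^ 2) + ∑ i, (ξT i).im ^ 2) * ∑ i, xT i ^ 2 := by ring
  -- lower bound on the real part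
  have hRe : -(‖z‖ * ‖c‖) ≤ (z * starRingEnd ℂ c).re := by
    have := Complex.abs_re_le_norm (z * starRingEnd ℂ c)
    have habs : ‖z * starRingEnd ℂ c‖ = ‖z‖ * ‖c‖ := by
      rw [norm_mul, Complex.norm_conj]
    rw [habs] at this
    linarith [neg_abs_le (z * starRingEnd ℂ c).re, abs_le.mp this]
  have habz : 0 ≤ ‖z‖ := norm_nonneg _
  have habc : 0 ≤ ‖c‖ := norm_nonneg _
  -- conclude
  rw [hBN, hsum, le_div_iff₀ hx]
  nlinarith [hCS, hRe, sq_nonneg (‖z‖ - d * ‖c‖), mul_pos hx hx,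
    mul_nonneg hA0 hs0]
end
end

section
/- Abstract discrete inf-sup lemma behind the first part of Theorem 5.2 (discrete inf-sup stability from a Gårding-type inequality, an interpolated sign-flip map, and approximable adjoint solutions): Let H be a complex Hilbert space, V ⊆ H a subspace, and B : H × H → ℂ a sesquilinear form with |B(u,v)| ≤ C_c‖u‖‖v‖ for all u, v ∈ H. Let γ > 0, c ≥ 0, S ≥ 0, M ≥ 0, ε ≥ 0, τ ≥ 0 satisfy C_c·(ε + τ·M) ≤ γ/2. Let F : V → H satisfy ‖F(v)‖ ≤ ‖v‖ for all v ∈ V, let I : H → V be a map with ‖I(F(v)) − F(v)‖ ≤ ε‖v‖ for all v ∈ V, and let P : H → H be a linear map with ‖P(v)‖ ≤ M‖v‖ for all v ∈ H. Assume: (i) (Gårding-type inequality) |B(v, F(v)) + c‖P(v)‖²| ≥ γ‖v‖² for all v ∈ V; (ii) (approximable adjoint solvability) for every v ∈ V there exist w ∈ H and w_h ∈ V with B(v, w) = c‖P(v)‖², ‖w‖ ≤ S‖P(v)‖, and ‖w − w_h‖ ≤ τ‖P(v)‖. Then for every v ∈ V there exists w' ∈ V with ‖w'‖ ≤ (1 +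 ε + (S + τ)·M)‖v‖ and |B(v, w')| ≥ (γ/2)‖v‖². -/
/-- **Abstract discrete inf-sup lemma** behind the first part of Theorem 5.2: discrete inf-sup
stability from a Gårding-type inequality, an interpolated sign-flip map, and approximable
adjoint solutions. -/
theorem abstract_discrete_inf_sup_from_garding
    {H : Type*} [NormedAddCommGroup H] [InnerProductSpace ℂ H] [CompleteSpace H]
    (V : Submodule ℂ H)
    (B : H → H → ℂ) (C_c : ℝ) (hC_c : 0 < C_c)
    (hB_add₁ : ∀ u v w : H, B (u + v) w = B u w + B v w)
    (hB_smul₁ : ∀ (c : ℂ) (u w : H), B (c • u) w = c * B u w)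
    (hB_add₂ : ∀ u v w : H, B u (v + w) = B u v + B u w)
    (hB_smul₂ : ∀ (c : ℂ) (u w : H), B u (c • w) = (starRingEnd ℂ c) * B u w)
    (hB_bound : ∀ u v : H, ‖B u v‖ ≤ C_c * ‖u‖ * ‖v‖)
    (γ c S M ε τ : ℝ) (hγ : 0 < γ) (hc : 0 ≤ c) (hS : 0 ≤ S) (hM : 0 ≤ M)
    (hε : 0 ≤ ε) (hτ : 0 ≤ τ)
    (hres : C_c * (ε + τ * M) ≤ γ / 2)
    (F : H → H) (hF : ∀ v ∈ V, ‖F v‖ ≤ ‖v‖)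
    (I : H → H) (hI_mem : ∀ u : H, I u ∈ V)
    (hI : ∀ v ∈ V, ‖I (F v) - F v‖ ≤ ε * ‖v‖)
    (P : H →ₗ[ℂ] H) (hP : ∀ v : H, ‖P v‖ ≤ M * ‖v‖)
    (hGarding : ∀ v ∈ V, γ * ‖v‖ ^ 2 ≤ ‖B v (F v) + ((c * ‖P v‖ ^ 2 : ℝ) : ℂ)‖)
    (hAdjoint : ∀ v ∈ V, ∃ w : H, ∃ w_h ∈ V,
      B v w = ((c * ‖P v‖ ^ 2 : ℝ) : ℂ) ∧ ‖w‖ ≤ S * ‖P v‖ ∧ ‖w - w_h‖ ≤ τ * ‖P v‖) :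
    ∀ v ∈ V, ∃ w' ∈ V, ‖w'‖ ≤ (1 + ε + (S + τ) * M) * ‖v‖ ∧
      γ / 2 * ‖v‖ ^ 2 ≤ ‖B v w'‖ := by

  intro v hv
  obtain ⟨w, w_h, hwhV, hBw, hwS, hwτ⟩ := hAdjoint v hv
  refine ⟨I (F v) + w_h, V.add_mem (hI_mem (F v)) hwhV, ?_, ?_⟩
  · have h1 : ‖I (F v) + w_h‖ ≤ ‖I (F v) - F v‖ + ‖F v‖ + (‖w_h - w‖ + ‖w‖) := by
      have : I (F v) + w_h = (I (F v) - F v) + F v + ((w_h - w) + w) := by abel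
      rw [this]
      refine (norm_add_le _ _).trans (add_le_add (norm_add_le _ _) (norm_add_le _ _))
    have hwh : ‖w_h - w‖ = ‖w - w_h‖ := by rw [norm_sub_rev]
    have hPv := hP v
    calc ‖I (F v) + w_h‖ ≤ ε * ‖v‖ + ‖v‖ + (τ * ‖P v‖ + S * ‖P v‖) := by
          refine h1.trans (add_le_add (add_le_add (hI v hv) (hF v hv)) ?_)
          exact add_le_add (hwh ▸ hwτ) hwS
      _ ≤ ε * ‖v‖ + ‖v‖ + (τ * (M * ‖v‖) + S * (M * ‖v‖)) := by
          gcongr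
      _ = (1 + ε + (S + τ) * M) * ‖v‖ := by ring
  · have hBneg : ∀ x y : H, B v (x - y) = B v x - B v y := by
      intro x y
      have : B v (x + (-1 : ℂ) • y) = B v x + (starRingEnd ℂ (-1)) * B v y := by
        rw [hB_add₂, hB_smul₂]
      simpa [sub_eq_add_neg] using this
    have hsplit : B v (I (F v) + w_h)
        = (B v (F v) + ((c * ‖P v‖ ^ 2 : ℝ) : ℂ)) + (B v (I (F v) - F v) + B v (w_h - w)) := by
      rw [hB_add₂, ← hBw, hBneg, hBneg]
      ring
    have he1 : ‖B v (I (F v) - F v)‖ ≤ C_c * ‖v‖ * (ε * ‖v‖) := by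
      refine (hB_bound _ _).trans ?_
      gcongr
      exact hI v hv
    have he2 : ‖B v (w_h - w)‖ ≤ C_c * ‖v‖ * (τ * (M * ‖v‖)) := by
      refine (hB_bound _ _).trans ?_
      have : ‖w_h - w‖ ≤ τ * (M * ‖v‖) := by
        rw [norm_sub_rev]
        exact hwτ.trans (by have := hP v; nlinarith)
      gcongr
    have hG := hGarding v hv
    have htri : ‖B v (F v) + ((c * ‖P v‖ ^ 2 : ℝ) : ℂ)‖
        ≤ ‖B v (I (F v) + w_h)‖ + ‖B v (I (F v) - F v)‖
          + ‖B v (w_h - w)‖ := by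
      have : B v (F v) + ((c * ‖P v‖ ^ 2 : ℝ) : ℂ)
          = B v (I (F v) + w_h) - B v (I (F v) - F v) - B v (w_h - w) := by
        rw [hsplit]; ring
      rw [this]
      calc ‖_‖ ≤ ‖B v (I (F v) + w_h) - B v (I (F v) - F v)‖
            + ‖B v (w_h - w)‖ := by
            simpa [sub_eq_add_neg] using
              (norm_sub_le (B v (I (F v) + w_h) - B v (I (F v) - F v)) (B v (w_h - w)))
        _ ≤ _ := by
            have := norm_sub_le (B v (I (F v) + w_h)) (B v (I (F v) - F v))
            linarith
    have hres' : C_c * ‖v‖ * (ε * ‖v‖) + C_c * ‖v‖ * (τ * (M * ‖v‖)) ≤ γ / 2 * ‖v‖ ^ 2 := by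
      have h2 : C_c * (ε + τ * M) * ‖v‖ ^ 2 ≤ γ / 2 * ‖v‖ ^ 2 := by
        exact mul_le_mul_of_nonneg_right hres (sq_nonneg _)
      nlinarith [norm_nonneg v]
    linarith
end
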